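/- Let K and L be commutative fields and q : K → L a multiplicative quadratic map. Then there exists a pair {φ₁, φ₂} of field monomorphisms from K into the algebraic closure of L such that q(a) = φ₁(a)·φ₂(a) for all a ∈ K. -/

import Mathlib

/-- A multiplicative quadratic map `q : K → L` between unital rings:
`q(ab) = q(a)q(b)`, `q(n·1) = n²` for all integers `n`, and
`f(a,b) = q(a+b) − q(a) − q(b)` is biadditive. -/
structure IsMultiplicativeQuadraticMap {K L : Type*} [Ring K] [Ring L] (q : K → L) : Prop where
  map_mul : ∀ a b : K, q (a * b) = q a * q b
  map_int : ∀ n : ℤ, q (n : K) = (n : L) ^ 2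
  biadd_left : ∀ a a' b : K,
    (q (a + a' + b) - q (a + a') - q b) =
      (q (a + b) - q a - q b) + (q (a' + b) - q a' - q b)
  biadd_right : ∀ a b b' : K,
    (q (a + (b + b')) - q a - q (b + b')) =
      (q (a + b) - q a - q b) + (q (a + b') - q a - q b')

namespace Stmt2Aux

variable {K L : Type*} [Field K] [Field L]

/-- the associated biadditive map -/
def fB (q : K → L) (a b : K) : L := q (a + b) - q a - q b

/-- the associated "trace" -/
def tr (q : K → L) (a : K) : L := fB q a 1

variable {q : K → L} (hq : IsMultiplicativeQuadraticMap q)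

include hq

theorem q0 : q 0 = 0 := by have := hq.map_int 0; simpa using this

theorem q1 : q 1 = 1 := by have := hq.map_int 1; simpa using this

theorem q2 : q (1 + 1) = 4 := by
  have := hq.map_int 2
  have e : ((2 : ℤ) : K) = 1 + 1 := by norm_num
  rw [e] at this
  rw [this]; norm_num

omit hq in
theorem fdef (a b : K) : q (a + b) = q a + q b + fB q a b := by simp [fB]

omit hq in
theorem fsymm (a b : K) : fB q a b = fB q b a := by simp [fB, add_comm]; ring

theorem f_addl (a a' b : K) : fB q (a + a') b = fB q a b + fB q a' b :=
  hq.biadd_left a a' b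

theorem f_addr (a b b' : K) : fB q a (b + b') = fB q a b + fB q a b' :=
  hq.biadd_right a b b'

theorem f_zerol (b : K) : fB q 0 b = 0 := by simp [fB, q0 hq]

omit hq in
theorem f_one_left (b : K) : fB q 1 b = tr q b := fsymm 1 b

theorem T_add (a b : K) : tr q (a + b) = tr q a + tr q b := hq.biadd_left a b 1

theorem T_zero : tr q 0 = 0 := by
  have := T_add hq 0 0; simpa using this.symm

theorem T_one : tr q 1 = 2 := by
  simp [tr, fB, q1 hq, q2 hq]; ring

theorem fmul (a b c : K) : fB q (a * c) (b * c) = fB q a b * q c := by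
  have h := hq.map_mul (a + b) c
  have e : (a + b) * c = a * c + b * c := by ring
  rw [e] at h
  simp only [fB]
  rw [h, hq.map_mul a c, hq.map_mul b c]
  ring

theorem f_self (a : K) : fB q a a = 2 * q a := by
  have e : a + a = (1 + 1) * a := by ring
  simp only [fB]
  rw [e, hq.map_mul (1+1) a, q2 hq]
  ring




theorem P (a b : K) : tr q a * tr q b = tr q (a * b) + fB q a b := by
  have h := hq.map_mul (a + 1) (b + 1)
  have e : (a + 1) * (b + 1) = a * b + a + b + 1 := by ring
  rw [e] at h
  have h1 : q (a * b + a + b + 1) = q (a * b + a + b) + q 1 + fB q (a * b + a + b) 1 :=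
    fdef _ _
  have h2 : fB q (a * b + a + b) 1 = tr q (a * b) + tr q a + tr q b := by
    rw [f_addl hq, f_addl hq]; rfl
  have h3 : q (a * b + a + b) = q (a * b + a) + q b + fB q (a * b + a) b := fdef _ _
  have h4 : fB q (a * b + a) b = fB q (a * b) b + fB q a b := f_addl hq _ _ _
  have h5 : q (a * b + a) = q (a * b) + q a + fB q (a * b) a := fdef _ _
  have h6 : fB q (a * b) a = tr q b * q a := by
    have := fmul hq b 1 a
    rw [one_mul] at this
    rw [mul_comm a b, this]; rfl
  have h7 : fB q (a * b) b = tr q a * q b := by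
    have := fmul hq a 1 b
    rw [one_mul] at this
    rw [this]; rfl
  have h8 : q (a + 1) = q a + q 1 + tr q a := fdef _ _
  have h9 : q (b + 1) = q b + q 1 + tr q b := fdef _ _
  have hab := hq.map_mul a b
  have hq1 := q1 hq
  rw [h8, h9, h1, h2, h3, h4, h5, h6, h7, hq1] at h
  linear_combination hab - h

theorem star2 (a b c d : K) :
    fB q (a * c) (b * d) + fB q (a * d) (b * c) = fB q a b * fB q c d := by
  have h := hq.map_mul (a + b) (c + d)
  have e : (a + b) * (c + d) = a * c + a * d + b * c + b * d := by ring
  rw [e] at h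
  have h1 : q (a*c + a*d + b*c + b*d) =
      q (a*c + a*d + b*c) + q (b*d) + fB q (a*c + a*d + b*c) (b*d) := fdef _ _
  have h2 : fB q (a*c + a*d + b*c) (b*d)
      = fB q (a*c) (b*d) + fB q (a*d) (b*d) + fB q (b*c) (b*d) := by
    rw [f_addl hq, f_addl hq]
  have h3 : q (a*c + a*d + b*c) = q (a*c + a*d) + q (b*c) + fB q (a*c + a*d) (b*c) := fdef _ _
  have h4 : fB q (a*c + a*d) (b*c) = fB q (a*c) (b*c) + fB q (a*d) (b*c) := f_addl hq _ _ _
  have h5 : q (a*c + a*d) = q (a*c) + q (a*d) + fB q (a*c) (a*d) := fdef _ _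
  have g1 : fB q (a*d) (b*d) = fB q a b * q d := fmul hq a b d
  have g2 : fB q (b*c) (b*d) = fB q c d * q b := by
    have := fmul hq c d b
    rw [mul_comm c b, mul_comm d b] at this
    exact this
  have g3 : fB q (a*c) (b*c) = fB q a b * q c := fmul hq a b c
  have g4 : fB q (a*c) (a*d) = fB q c d * q a := by
    have := fmul hq c d a
    rw [mul_comm c a, mul_comm d a] at this
    exact this
  have hac := hq.map_mul a c
  have had := hq.map_mul a d
  have hbc := hq.map_mul b c
  have hbd := hq.map_mul b d
  have hcd : q (c + d) = q c + q d + fB q c d := fdef _ _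
  have hab : q (a + b) = q a + q b + fB q a b := fdef _ _
  rw [h1, h2, h3, h4, h5, g1, g2, g3, g4, hab, hcd] at h
  linear_combination h - hac - had - hbc - hbd

theorem Tsq (a : K) : tr q (a * a) = tr q a ^ 2 - 2 * q a := by
  have h := P hq a a
  have h2 := f_self hq a
  linear_combination - h - h2

theorem f1ab (a b : K) : fB q a (a * b) = q a * tr q b := by
  have h := fmul hq 1 b a
  rw [one_mul, mul_comm b a] at h
  rw [h, f_one_left]; ring

theorem I7 (a b c : K) : fB q (a * c) b + fB q a (b * c) = fB q a b * tr q c := by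
  have h := star2 hq a b c 1
  rw [mul_one, mul_one] at h
  rw [h]; rfl

theorem L9 (x c : K) : fB q x (c * c) = tr q c * fB q x c - q c * tr q x := by
  have h1 := P hq x (c * c)
  have e1 : x * (c * c) = x * c * c := by ring
  rw [e1] at h1
  have h2 := P hq (x * c) c
  have h3 := P hq x c
  have h4 := Tsq hq c
  have h5 : fB q (x * c) c = tr q x * q c := by
    have := fmul hq x 1 c
    rw [one_mul] at this
    rw [this]; rfl
  linear_combination - h1 + tr q x * h4 + h2 + h5 + tr q c * h3

theorem iiGen (a b c : K) :
    fB q a c * fB q b c =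
      tr q c * fB q (a * b) c + q c * (tr q a * tr q b - 2 * tr q (a * b)) := by
  have h := star2 hq a c b c
  have h1 : fB q (a * c) (c * b) = fB q a b * q c := by
    rw [mul_comm c b]; exact fmul hq a b c
  have h2 := L9 hq (a * b) c
  have h3 := P hq a b
  linear_combination - h + h1 + h2 - q c * h3

theorem I8gen (a b c : K) :
    tr q a * fB q b c + tr q b * fB q a c =
      2 * fB q (a * b) c + fB q a b * tr q c := by
  have h1 := P hq a (b * c)
  have e1 : a * (b * c) = a * b * c := by ring
  rw [e1] at h1
  have h2 := P hq b (a * c)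
  have e2 : b * (a * c) = a * b * c := by ring
  rw [e2] at h2
  have h3 := P hq (a * b) c
  have h4 := P hq a b
  have h5 := P hq b c
  have h6 := P hq a c
  have h7 := I7 hq a b c
  have h8 : fB q b (a * c) = fB q (a * c) b := fsymm _ _
  linear_combination - tr q a * h5 - tr q b * h6 - h1 - h2 + 2 * h3 + 2 * tr q c * h4 - h7 - h8

theorem J (a c : K) : fB q (a * a) c = tr q a * fB q a c - q a * tr q c := by
  have h1 := P hq (a * a) c
  have h2 := P hq a c
  have h3 := P hq a (a * c)
  have e : a * (a * c) = a * a * c := by ring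
  rw [e] at h3
  have h4 := f1ab hq a c
  have h5 := Tsq hq a
  linear_combination - h1 + h3 + tr q a * h2 + h4 + tr q c * h5

/-- the char ≠ 2 bilinear form -/
def Eb (q : K → L) (a b : K) : L := 2 * tr q (a * b) - tr q a * tr q b

/-- the discriminant -/
def Db (q : K → L) (a : K) : L := tr q a ^ 2 - 4 * q a

theorem EbD (a : K) : Eb q a a = Db q a := by
  have h := Tsq hq a
  simp only [Eb, Db]
  rw [h]; ring

omit hq in
theorem Eb_symm (a b : K) : Eb q a b = Eb q b a := by
  simp only [Eb]
  rw [mul_comm a b, mul_comm (tr q a) (tr q b)]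

theorem Eb_addl (a b c : K) : Eb q (a + b) c = Eb q a c + Eb q b c := by
  simp only [Eb]
  have e : (a + b) * c = a * c + b * c := by ring
  rw [e, T_add hq, T_add hq]; ring

theorem Eb_one (b : K) : Eb q 1 b = 0 := by
  simp only [Eb]
  rw [one_mul, T_one hq]; ring

theorem Eb_zero (b : K) : Eb q 0 b = 0 := by
  simp only [Eb]
  rw [zero_mul, T_zero hq]; ring

theorem Esq (a b : K) : Eb q a b ^ 2 = Db q a * Db q b := by
  have ha := P hq (a * b) (a * b)
  have e1 : a * b * (a * b) = a * a * (b * b) := by ring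
  rw [e1, f_self hq, hq.map_mul a b] at ha
  have hb := P hq a (a * b)
  have e2 : a * (a * b) = a * a * b := by ring
  rw [e2, f1ab hq] at hb
  have hc := P hq b (a * a * b)
  have e3 : b * (a * a * b) = a * a * (b * b) := by ring
  rw [e3] at hc
  have hc2 : fB q b (a * a * b) = tr q (a * a) * q b := by
    have := fmul hq 1 (a * a) b
    rw [one_mul] at this
    rw [this, f_one_left]
  rw [hc2] at hc
  have hd := Tsq hq a
  simp only [Eb, Db]
  linear_combination (4:L) * ha - 4 * tr q b * hb - 4 * hc - 4 * q b * hd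

theorem Epol (h2 : (2 : L) ≠ 0) (a b c : K) :
    Eb q a c * Eb q b c = Eb q a b * Db q c := by
  have h := Esq hq (a + b) c
  rw [Eb_addl hq] at h
  have hD : Db q (a + b) = Db q a + 2 * Eb q a b + Db q b := by
    rw [← EbD hq, ← EbD hq, ← EbD hq]
    rw [show Eb q (a+b) (a+b) = Eb q a (a+b) + Eb q b (a+b) from Eb_addl hq a b (a+b),
      Eb_symm a (a+b), Eb_symm b (a+b), Eb_addl hq, Eb_addl hq,
      Eb_symm a b]
    ring
  rw [hD] at h
  have ha := Esq hq a c
  have hb := Esq hq b c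
  have key : 2 * (Eb q a c * Eb q b c) = 2 * (Eb q a b * Db q c) := by
    linear_combination h - ha - hb
  exact mul_left_cancel₀ h2 key

theorem Emul (a b c : K) :
    tr q a * Eb q b c + tr q b * Eb q a c = 2 * Eb q (a * b) c := by
  have h1 := P hq a (b * c)
  have e1 : a * (b * c) = a * b * c := by ring
  rw [e1] at h1
  have h2 := P hq b (a * c)
  have e2 : b * (a * c) = a * b * c := by ring
  rw [e2] at h2
  have h3 := P hq a b
  have h7 := I7 hq a b c
  have h8 : fB q b (a * c) = fB q (a * c) b := fsymm _ _
  simp only [Eb]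
  linear_combination 2 * h1 + 2 * h2 - 2 * tr q c * h3 + 2 * h7 + 2 * h8

omit hq in
theorem quadRoot {M : Type*} [Field M] [IsAlgClosed M] (u v : M) :
    ∃ r : M, r ^ 2 + u * r + v = 0 := by
  have hdlt : (Polynomial.C u * Polynomial.X + Polynomial.C v).degree
      < (Polynomial.X ^ 2 : Polynomial M).degree := by
    rw [Polynomial.degree_X_pow]
    exact lt_of_le_of_lt Polynomial.degree_linear_le (by norm_num)
  have hdeg : (Polynomial.X ^ 2 + (Polynomial.C u * Polynomial.X + Polynomial.C v)).degree ≠ 0 := by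
    rw [Polynomial.degree_add_eq_left_of_degree_lt hdlt, Polynomial.degree_X_pow]
    norm_num
  obtain ⟨r, hr⟩ := IsAlgClosed.exists_root _ hdeg
  refine ⟨r, ?_⟩
  have h := hr
  simp only [Polynomial.IsRoot, Polynomial.eval_add, Polynomial.eval_pow, Polynomial.eval_X,
    Polynomial.eval_mul, Polynomial.eval_C] at h
  linear_combination h

omit hq in
theorem sqRoot {M : Type*} [Field M] [IsAlgClosed M] (x : M) : ∃ r : M, r ^ 2 = x := by
  obtain ⟨r, hr⟩ := quadRoot 0 (-x)
  exact ⟨r, by linear_combination hr⟩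

theorem case2a (h2 : (2 : L) = 0) (hT : ∀ a : K, tr q a = 0) :
    ∃ φ₁ φ₂ : K →+* AlgebraicClosure L, ∀ a : K,
      algebraMap L (AlgebraicClosure L) (q a) = φ₁ a * φ₂ a := by
  classical
  set ι := algebraMap L (AlgebraicClosure L) with hιdef
  have h2' : (2 : AlgebraicClosure L) = 0 := by
    rw [← map_ofNat ι 2, h2, map_zero]
  have sqInj : ∀ x y : AlgebraicClosure L, x ^ 2 = y ^ 2 → x = y := by
    intro x y hxy
    have h : (x - y) ^ 2 = 0 := by linear_combination hxy + (y ^ 2 - x * y) * h2'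
    have := pow_eq_zero_iff (two_ne_zero) |>.mp h
    exact sub_eq_zero.mp this
  have fz : ∀ a b : K, fB q a b = 0 := by
    intro a b
    have := P hq a b
    rw [hT a, hT b, hT _] at this
    linear_combination - this
  have qadd : ∀ a b : K, q (a + b) = q a + q b := by
    intro a b
    have := fdef (q := q) a b
    rw [fz a b] at this
    linear_combination this
  have sqex : ∀ x : AlgebraicClosure L, ∃ r, r ^ 2 = x := sqRoot
  set s : AlgebraicClosure L → AlgebraicClosure L := fun x => Classical.choose (sqex x) with hs0
  have hs : ∀ x, (s x) ^ 2 = x := fun x => Classical.choose_spec (sqex x)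
  have haddkey : ∀ x y : AlgebraicClosure L, (s x + s y) ^ 2 = x + y := by
    intro x y
    linear_combination hs x + hs y + (s x * s y) * h2'
  let φ : K →+* AlgebraicClosure L :=
    { toFun := fun a => s (ι (q a)),
      map_one' := sqInj _ _ (by rw [hs, q1 hq, map_one, one_pow]),
      map_mul' := fun a b => sqInj _ _ (by
        rw [hs, mul_pow, hs, hs, hq.map_mul, map_mul]),
      map_zero' := sqInj _ _ (by rw [hs, q0 hq, map_zero, zero_pow two_ne_zero]),
      map_add' := fun a b => sqInj _ _ (by
        rw [hs, haddkey, qadd, map_add]) }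
  refine ⟨φ, φ, fun a => ?_⟩
  show ι (q a) = s (ι (q a)) * s (ι (q a))
  rw [← pow_two, hs]

theorem case1a (h2 : (2 : L) ≠ 0) (hD : ∀ a : K, Db q a = 0) :
    ∃ φ₁ φ₂ : K →+* AlgebraicClosure L, ∀ a : K,
      algebraMap L (AlgebraicClosure L) (q a) = φ₁ a * φ₂ a := by
  classical
  set ι := algebraMap L (AlgebraicClosure L) with hιdef
  have h2' : (2 : AlgebraicClosure L) ≠ 0 := by
    intro h
    apply h2
    apply ι.injective
    rw [map_ofNat, map_zero, h]
  have hE : ∀ a b : K, tr q a * tr q b = 2 * tr q (a * b) := by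
    intro a b
    have h := Esq hq a b
    rw [hD a, hD b, mul_zero] at h
    have h0 := pow_eq_zero_iff (two_ne_zero) |>.mp h
    simp only [Eb] at h0
    linear_combination - h0
  have hq4 : ∀ a : K, tr q a ^ 2 = 4 * q a := by
    intro a
    have := hD a
    simp only [Db] at this
    linear_combination this
  have hone : ι (tr q 1) = 2 := by rw [T_one hq, map_ofNat]
  let φ : K →+* AlgebraicClosure L :=
    { toFun := fun a => ι (tr q a) / 2,
      map_one' := by show ι (tr q 1) / 2 = 1; rw [hone]; field_simp
      map_mul' := fun a b => by
        show ι (tr q (a * b)) / 2 = ι (tr q a) / 2 * (ι (tr q b) / 2)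
        have key := congrArg ι (hE a b)
        simp only [map_mul, map_ofNat] at key
        field_simp
        linear_combination -1 * key
      map_zero' := by show ι (tr q 0) / 2 = 0; rw [T_zero hq, map_zero, zero_div]
      map_add' := fun a b => by
        show ι (tr q (a + b)) / 2 = ι (tr q a) / 2 + ι (tr q b) / 2
        rw [T_add hq, map_add, add_div] }
  refine ⟨φ, φ, fun a => ?_⟩
  show ι (q a) = ι (tr q a) / 2 * (ι (tr q a) / 2)
  have key := congrArg ι (hq4 a)
  simp only [map_pow, map_mul, map_ofNat] at key
  field_simp
  linear_combination - key

theorem case1b (h2 : (2 : L) ≠ 0) (a₀ : K) (hD0 : Db q a₀ ≠ 0) :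
    ∃ φ₁ φ₂ : K →+* AlgebraicClosure L, ∀ a : K,
      algebraMap L (AlgebraicClosure L) (q a) = φ₁ a * φ₂ a := by
  classical
  set ι := algebraMap L (AlgebraicClosure L) with hιdef
  have h2' : (2 : AlgebraicClosure L) ≠ 0 := by
    intro h
    apply h2
    apply ι.injective
    rw [map_ofNat, map_zero, h]
  obtain ⟨d, hd0⟩ := sqRoot (M := AlgebraicClosure L) (ι (Db q a₀))
  have hdne : d ≠ 0 := by
    intro h
    apply hD0
    apply ι.injective
    rw [map_zero, ← hd0, h]
    ring
  have mT : ∀ a b : K, ι (Eb q a b) = 2 * ι (tr q (a * b)) - ι (tr q a) * ι (tr q b) := by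
    intro a b
    have h : Eb q a b = 2 * tr q (a * b) - tr q a * tr q b := rfl
    have := congrArg ι h
    simpa only [map_sub, map_mul, map_ofNat] using this
  have mEpol : ∀ a b : K, ι (Eb q a a₀) * ι (Eb q b a₀) = ι (Eb q a b) * ι (Db q a₀) := by
    intro a b
    have := congrArg ι (Epol hq h2 a b a₀)
    simpa only [map_mul] using this
  have mEmul : ∀ a b : K,
      ι (tr q a) * ι (Eb q b a₀) + ι (tr q b) * ι (Eb q a a₀) = 2 * ι (Eb q (a * b) a₀) := by
    intro a b
    have := congrArg ι (Emul hq a b a₀)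
    simpa only [map_add, map_mul, map_ofNat] using this
  have mDb : ∀ a : K, ι (Db q a) = ι (tr q a) ^ 2 - 4 * ι (q a) := by
    intro a
    have h : Db q a = tr q a ^ 2 - 4 * q a := rfl
    have := congrArg ι h
    simpa only [map_sub, map_mul, map_pow, map_ofNat] using this
  have mEbD : ∀ a : K, ι (Eb q a a) = ι (Db q a) := fun a => congrArg ι (EbD hq a)
  let φ₁ : K →+* AlgebraicClosure L :=
    { toFun := fun a => (ι (tr q a) + ι (Eb q a a₀) / d) / 2,
      map_one' := by
        show (ι (tr q 1) + ι (Eb q 1 a₀) / d) / 2 = 1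
        rw [T_one hq, Eb_one hq, map_zero, map_ofNat]
        field_simp
        ring
      map_mul' := fun a b => by
        show (ι (tr q (a * b)) + ι (Eb q (a * b) a₀) / d) / 2 =
          (ι (tr q a) + ι (Eb q a a₀) / d) / 2 * ((ι (tr q b) + ι (Eb q b a₀) / d) / 2)
        field_simp
        linear_combination (-d) * mEmul a b + (-1) * mEpol a b +
          (ι (Eb q a b)) * hd0 + (-d^2) * mT a b
      map_zero' := by
        show (ι (tr q 0) + ι (Eb q 0 a₀) / d) / 2 = 0
        rw [T_zero hq, Eb_zero hq, map_zero]
        simp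
      map_add' := fun a b => by
        show (ι (tr q (a + b)) + ι (Eb q (a + b) a₀) / d) / 2 =
          (ι (tr q a) + ι (Eb q a a₀) / d) / 2 + (ι (tr q b) + ι (Eb q b a₀) / d) / 2
        rw [T_add hq, Eb_addl hq, map_add, map_add]
        field_simp
        ring }
  let φ₂ : K →+* AlgebraicClosure L :=
    { toFun := fun a => (ι (tr q a) - ι (Eb q a a₀) / d) / 2,
      map_one' := by
        show (ι (tr q 1) - ι (Eb q 1 a₀) / d) / 2 = 1
        rw [T_one hq, Eb_one hq, map_zero, map_ofNat]
        field_simp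
        ring
      map_mul' := fun a b => by
        show (ι (tr q (a * b)) - ι (Eb q (a * b) a₀) / d) / 2 =
          (ι (tr q a) - ι (Eb q a a₀) / d) / 2 * ((ι (tr q b) - ι (Eb q b a₀) / d) / 2)
        field_simp
        linear_combination (d) * mEmul a b + (-1) * mEpol a b +
          (ι (Eb q a b)) * hd0 + (-d^2) * mT a b
      map_zero' := by
        show (ι (tr q 0) - ι (Eb q 0 a₀) / d) / 2 = 0
        rw [T_zero hq, Eb_zero hq, map_zero]
        simp
      map_add' := fun a b => by
        show (ι (tr q (a + b)) - ι (Eb q (a + b) a₀) / d) / 2 =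
          (ι (tr q a) - ι (Eb q a a₀) / d) / 2 + (ι (tr q b) - ι (Eb q b a₀) / d) / 2
        rw [T_add hq, Eb_addl hq, map_add, map_add]
        field_simp
        ring }
  refine ⟨φ₁, φ₂, fun a => ?_⟩
  show ι (q a) = (ι (tr q a) + ι (Eb q a a₀) / d) / 2 * ((ι (tr q a) - ι (Eb q a a₀) / d) / 2)
  field_simp
  linear_combination mEpol a a + ι (Db q a) * hd0 + d ^ 2 * (mDb a) - (mEbD a) * ι (Db q a₀) + (-2*ι (Db q a)) * hd0 + (2*ι (Db q a₀)) * mEbD a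

theorem case2b (h2 : (2 : L) = 0) (a₀ : K) (hT0 : tr q a₀ ≠ 0) :
    ∃ φ₁ φ₂ : K →+* AlgebraicClosure L, ∀ a : K,
      algebraMap L (AlgebraicClosure L) (q a) = φ₁ a * φ₂ a := by
  classical
  set ι := algebraMap L (AlgebraicClosure L) with hιdef
  have h2' : (2 : AlgebraicClosure L) = 0 := by
    rw [← map_ofNat ι 2, h2, map_zero]
  have t₀ne : ι (tr q a₀) ≠ 0 := by
    intro h
    exact hT0 (ι.injective (by rw [h, map_zero]))
  obtain ⟨r, hr⟩ := quadRoot (-(ι (tr q a₀))) (ι (q a₀))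
  have w1 : ∀ a b : K, ι (tr q a) * ι (tr q b) = ι (tr q (a * b)) + ι (fB q a b) := by
    intro a b
    have := congrArg ι (P hq a b)
    simpa only [map_add, map_mul] using this
  have w2 : ∀ a b : K, ι (tr q a) * ι (fB q b a₀) + ι (tr q b) * ι (fB q a a₀) =
      2 * ι (fB q (a * b) a₀) + ι (fB q a b) * ι (tr q a₀) := by
    intro a b
    have := congrArg ι (I8gen hq a b a₀)
    simpa only [map_add, map_mul, map_ofNat] using this
  have w3 : ∀ a b : K, ι (fB q a a₀) * ι (fB q b a₀) =
      ι (tr q a₀) * ι (fB q (a * b) a₀) +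
        ι (q a₀) * (ι (tr q a) * ι (tr q b) - 2 * ι (tr q (a * b))) := by
    intro a b
    have := congrArg ι (iiGen hq a b a₀)
    simpa only [map_add, map_mul, map_sub, map_ofNat] using this
  have w4 : ∀ a : K, ι (fB q (a * a) a₀) =
      ι (tr q a) * ι (fB q a a₀) - ι (q a) * ι (tr q a₀) := by
    intro a
    have := congrArg ι (J hq a a₀)
    simpa only [map_sub, map_mul] using this
  have wone : ι (fB q 1 a₀) = ι (tr q a₀) := congrArg ι (f_one_left a₀)
  have wT1 : ι (tr q 1) = 2 := by rw [T_one hq, map_ofNat]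
  have waddf : ∀ a b : K, ι (fB q (a + b) a₀) = ι (fB q a a₀) + ι (fB q b a₀) := by
    intro a b
    have := congrArg ι (f_addl hq a b a₀)
    simpa only [map_add] using this
  have waddT : ∀ a b : K, ι (tr q (a + b)) = ι (tr q a) + ι (tr q b) := by
    intro a b
    have := congrArg ι (T_add hq a b)
    simpa only [map_add] using this
  have wzf : ι (fB q 0 a₀) = 0 := by rw [f_zerol hq, map_zero]
  have wzT : ι (tr q 0) = 0 := by rw [T_zero hq, map_zero]
  let φ₁ : K →+* AlgebraicClosure L :=
    { toFun := fun a => (ι (fB q a a₀) + ι (tr q a) * r) / ι (tr q a₀),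
      map_one' := by
        show (ι (fB q 1 a₀) + ι (tr q 1) * r) / ι (tr q a₀) = 1
        rw [wone, wT1]
        field_simp
        linear_combination r * h2'
      map_mul' := fun a b => by
        show (ι (fB q (a * b) a₀) + ι (tr q (a * b)) * r) / ι (tr q a₀) =
          (ι (fB q a a₀) + ι (tr q a) * r) / ι (tr q a₀) *
            ((ι (fB q b a₀) + ι (tr q b) * r) / ι (tr q a₀))
        field_simp
        linear_combination (-(ι (tr q a) * ι (tr q b))) * hr +
          (-1) * w3 a b + (-r) * w2 a b +
          (-(ι (tr q a₀) * r)) * w1 a b +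
          (ι (tr q (a * b)) * ι (q a₀) -
            ι (fB q (a * b) a₀) * r -
            ι (tr q a₀) * r * ι (fB q a b)) * h2'
      map_zero' := by
        show (ι (fB q 0 a₀) + ι (tr q 0) * r) / ι (tr q a₀) = 0
        rw [wzf, wzT]
        simp
      map_add' := fun a b => by
        show (ι (fB q (a + b) a₀) + ι (tr q (a + b)) * r) / ι (tr q a₀) =
          (ι (fB q a a₀) + ι (tr q a) * r) / ι (tr q a₀) +
            (ι (fB q b a₀) + ι (tr q b) * r) / ι (tr q a₀)
        rw [waddf, waddT]
        field_simp
        ring }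
  let φ₂ : K →+* AlgebraicClosure L :=
    { toFun := fun a => ι (tr q a) - (ι (fB q a a₀) + ι (tr q a) * r) / ι (tr q a₀),
      map_one' := by
        show ι (tr q 1) - (ι (fB q 1 a₀) + ι (tr q 1) * r) / ι (tr q a₀) = 1
        rw [wone, wT1]
        field_simp
        linear_combination (- r) * h2'
      map_mul' := fun a b => by
        show ι (tr q (a * b)) -
            (ι (fB q (a * b) a₀) + ι (tr q (a * b)) * r) / ι (tr q a₀) =
          (ι (tr q a) - (ι (fB q a a₀) + ι (tr q a) * r) / ι (tr q a₀)) *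
            (ι (tr q b) - (ι (fB q b a₀) + ι (tr q b) * r) / ι (tr q a₀))
        field_simp
        linear_combination (-(ι (tr q a) * ι (tr q b))) * hr +
          (-1) * w3 a b +
          ((ι (tr q a₀) - r)) * w2 a b +
          (ι (tr q a₀) * r - ι (tr q a₀) ^ 2) * w1 a b +
          ((ι (tr q (a * b)) * ι (q a₀) - ι (fB q (a * b) a₀) * r)) * h2'
      map_zero' := by
        show ι (tr q 0) - (ι (fB q 0 a₀) + ι (tr q 0) * r) / ι (tr q a₀) = 0
        rw [wzf, wzT]
        simp
      map_add' := fun a b => by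
        show ι (tr q (a + b)) -
            (ι (fB q (a + b) a₀) + ι (tr q (a + b)) * r) / ι (tr q a₀) =
          (ι (tr q a) - (ι (fB q a a₀) + ι (tr q a) * r) / ι (tr q a₀)) +
            (ι (tr q b) - (ι (fB q b a₀) + ι (tr q b) * r) / ι (tr q a₀))
        rw [waddf, waddT]
        field_simp
        ring }
  refine ⟨φ₁, φ₂, fun a => ?_⟩
  show ι (q a) = (ι (fB q a a₀) + ι (tr q a) * r) / ι (tr q a₀) *
    (ι (tr q a) - (ι (fB q a a₀) + ι (tr q a) * r) / ι (tr q a₀))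
  field_simp
  linear_combination (ι (tr q a) ^ 2) * hr + w3 a a + ι (tr q a₀) * w4 a +
    (-(ι (q a₀) * ι (tr q (a * a))) + ι (fB q a a₀) * ι (tr q a) * r) * h2'

end Stmt2Aux

/-- Let `K` and `L` be commutative fields and `q : K → L` a multiplicative
quadratic map.  Then there exists a pair `{φ₁, φ₂}` of field monomorphisms from `K` into the
algebraic closure of `L` such that `q(a) = φ₁(a) · φ₂(a)` for all `a ∈ K`. -/
theorem stmt_2 {K L : Type*} [Field K] [Field L] (q : K → L)
    (hq : IsMultiplicativeQuadraticMap q) :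
    ∃ φ₁ φ₂ : K →+* AlgebraicClosure L, ∀ a : K,
      algebraMap L (AlgebraicClosure L) (q a) = φ₁ a * φ₂ a := by
  by_cases h2 : (2 : L) = 0
  · by_cases hT : ∀ a : K, Stmt2Aux.tr q a = 0
    · exact Stmt2Aux.case2a hq h2 hT
    · push_neg at hT
      obtain ⟨a₀, h⟩ := hT
      exact Stmt2Aux.case2b hq h2 a₀ h
  · by_cases hD : ∀ a : K, Stmt2Aux.Db q a = 0
    · exact Stmt2Aux.case1a hq h2 hD
    · push_neg at hD
      obtain ⟨a₀, h⟩ := hD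
      exact Stmt2Aux.case1b hq h2 a₀ h
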